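/- In the setting of mixed-logit demand with log-normal mixing (q_j(p) = M ∫₀^∞ σ_j(p, α) f(α) dα, with σ_j the logit choice probability and f the log-normal density with parameters μ, σ > 0), q_j is differentiable in p_j on ℝ_{++}^J with ∂_{p_j} q_j(p) = −M ∫₀^∞ α σ_j(p,α)(1 − σ_j(p,α)) f(α) dα, and for each fixed ray p ∈ ℝ_{++}^J, (−∂_{p_j} q_j(λ p)) / (M e^{δ_j} (−L'(λ p_j))) → 1 as λ → ∞, where L is the log-normal Laplace transform. -/

import Mathlib

open MeasureTheory Real Filter


/-- Density of the log-normal distribution with parameters `μ` and `σ` on `(0, ∞)`. -/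
noncomputable def lognormalPdf (μ σ : ℝ) (α : ℝ) : ℝ :=
  (1 / (α * σ * Real.sqrt (2 * Real.pi))) * Real.exp (-(Real.log α - μ) ^ 2 / (2 * σ ^ 2))

/-- Laplace transform of the log-normal distribution. -/
noncomputable def lnLaplace (μ σ : ℝ) (x : ℝ) : ℝ :=
  ∫ α in Set.Ioi (0 : ℝ), Real.exp (-α * x) * lognormalPdf μ σ α

/-- Logit choice probability of product `j` at prices `p`, mean utilities `δ`,
and price coefficient `α`. -/
noncomputable def logitShare {J : ℕ} (δ : Fin J → ℝ) (j : Fin J) (p : Fin J → ℝ) (α : ℝ) : ℝ :=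
  Real.exp (δ j - α * p j) / (1 + ∑ l, Real.exp (δ l - α * p l))

/-- Mixed-logit demand for product `j` with log-normal mixing over the price coefficient. -/
noncomputable def qLN {J : ℕ} (δ : Fin J → ℝ) (M μ σ : ℝ) (j : Fin J) (p : Fin J → ℝ) : ℝ :=
  M * ∫ α in Set.Ioi (0 : ℝ), logitShare δ j p α * lognormalPdf μ σ α

/-- Partial derivative of `F : (Fin J → ℝ) → ℝ` in the `k`-th coordinate at `p`. -/
noncomputable def pd {J : ℕ} (F : (Fin J → ℝ) → ℝ) (k : Fin J) (p : Fin J → ℝ) : ℝ :=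
  deriv (fun t => F (Function.update p k t)) (p k)


section basic
variable {μ σ : ℝ} (hσ : 0 < σ)

lemma sqrt2pi_pos : 0 < Real.sqrt (2 * Real.pi) := Real.sqrt_pos.2 (by positivity)

lemma lpdf_eq {α : ℝ} (hα : 0 < α) :
    lognormalPdf μ σ α =
      Real.exp (-Real.log α - (Real.log α - μ) ^ 2 / (2 * σ ^ 2)) / (σ * Real.sqrt (2 * Real.pi)) := by
  rw [lognormalPdf,
    show -Real.log α - (Real.log α - μ) ^ 2 / (2 * σ ^ 2)
        = -Real.log α + -(Real.log α - μ) ^ 2 / (2 * σ ^ 2) by ring,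
    show (-(Real.log α - μ) ^ 2 / (2 * σ ^ 2) : ℝ)
        = -((Real.log α - μ) ^ 2 / (2 * σ ^ 2)) by ring]
  rw [Real.exp_add, Real.exp_neg ((Real.log α - μ) ^ 2 / (2 * σ ^ 2)), Real.exp_neg,
    Real.exp_log hα]
  ring

lemma lpdf_nonneg (hσ : 0 < σ) {α : ℝ} (hα : 0 < α) : 0 ≤ lognormalPdf μ σ α := by
  rw [lpdf_eq hα]; positivity

lemma lpdf_pos (hσ : 0 < σ) {α : ℝ} (hα : 0 < α) : 0 < lognormalPdf μ σ α := by
  rw [lpdf_eq hα]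
  have := sqrt2pi_pos
  positivity

/-- master bound: `exp (r * log α) * f α ≤ C r`. -/
lemma lpdf_mul_le (hσ : 0 < σ) (r : ℝ) {α : ℝ} (hα : 0 < α) :
    Real.exp (r * Real.log α) * lognormalPdf μ σ α ≤
      Real.exp (μ * (r - 1) + σ ^ 2 * (r - 1) ^ 2 / 2) / (σ * Real.sqrt (2 * Real.pi)) := by
  rw [lpdf_eq hα]
  rw [mul_div_assoc', ← Real.exp_add]
  have h2 : 0 < σ * Real.sqrt (2 * Real.pi) := by have := sqrt2pi_pos; positivity
  gcongr Real.exp ?_ / _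
  set t := Real.log α with ht
  rw [← sub_nonneg]
  have expand : μ * (r - 1) + σ ^ 2 * (r - 1) ^ 2 / 2 -
      (r * t + (-t - (t - μ) ^ 2 / (2 * σ ^ 2)))
      = (t - μ - σ ^ 2 * (r - 1)) ^ 2 / (2 * σ ^ 2) := by
    field_simp
    ring
  rw [expand]
  positivity

lemma lpdf_le (hσ : 0 < σ) {α : ℝ} (hα : 0 < α) :
    lognormalPdf μ σ α ≤ Real.exp (-μ + σ ^ 2 / 2) / (σ * Real.sqrt (2 * Real.pi)) := by
  have := lpdf_mul_le hσ 0 hα (μ := μ)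
  simpa using this.trans_eq (by norm_num)

lemma mul_lpdf_le (hσ : 0 < σ) {α : ℝ} (hα : 0 < α) :
    α * lognormalPdf μ σ α ≤ 1 / (σ * Real.sqrt (2 * Real.pi)) := by
  have := lpdf_mul_le hσ 1 hα (μ := μ)
  rw [one_mul, Real.exp_log hα] at this
  simpa using this

lemma lpdf_continuousOn (hσ : 0 < σ) : ContinuousOn (lognormalPdf μ σ) (Set.Ioi 0) := by
  apply ContinuousOn.mul
  · apply ContinuousOn.div continuousOn_const
    · exact ((continuousOn_id.mul continuousOn_const).mul continuousOn_const)
    · intro x hx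
      have hx' : (0:ℝ) < x := hx
      have := sqrt2pi_pos
      exact ne_of_gt (by positivity)
  · apply Real.continuous_exp.comp_continuousOn
    apply ContinuousOn.div ?_ continuousOn_const (fun x _ => ne_of_gt (by positivity))
    apply ContinuousOn.neg
    exact ((Real.continuousOn_log.mono (by intro x hx; exact ne_of_gt hx)).sub continuousOn_const).pow 2
end basic


section share
variable {J : ℕ} {δ : Fin J → ℝ} {j : Fin J}

lemma den_pos (p : Fin J → ℝ) (α : ℝ) : 0 < 1 + ∑ l, Real.exp (δ l - α * p l) := by
  have : 0 ≤ ∑ l, Real.exp (δ l - α * p l) :=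
    Finset.sum_nonneg fun l _ => (Real.exp_pos _).le
  linarith

lemma logitShare_pos (p : Fin J → ℝ) (α : ℝ) : 0 < logitShare δ j p α :=
  div_pos (Real.exp_pos _) (den_pos p α)

lemma logitShare_le (p : Fin J → ℝ) (α : ℝ) :
    logitShare δ j p α ≤ Real.exp (δ j - α * p j) := by
  rw [logitShare, div_le_iff₀ (den_pos p α)]
  have h1 : (1:ℝ) ≤ 1 + ∑ l, Real.exp (δ l - α * p l) := by
    have : 0 ≤ ∑ l, Real.exp (δ l - α * p l) :=
      Finset.sum_nonneg fun l _ => (Real.exp_pos _).le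
    linarith
  nlinarith [Real.exp_pos (δ j - α * p j)]

lemma logitShare_lt_one (p : Fin J → ℝ) (α : ℝ) : logitShare δ j p α < 1 := by
  rw [logitShare, div_lt_one (den_pos p α)]
  have hj : Real.exp (δ j - α * p j) ≤ ∑ l, Real.exp (δ l - α * p l) :=
    Finset.single_le_sum (f := fun l => Real.exp (δ l - α * p l))
      (fun l _ => (Real.exp_pos _).le) (Finset.mem_univ j)
  linarith

lemma one_sub_logitShare_ge (p : Fin J → ℝ) (α : ℝ) :
    1 / (1 + ∑ l, Real.exp (δ l - α * p l)) ≤ 1 - logitShare δ j p α := by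
  have hd := den_pos (δ := δ) p α
  have hj : Real.exp (δ j - α * p j) ≤ ∑ l, Real.exp (δ l - α * p l) :=
    Finset.single_le_sum (f := fun l => Real.exp (δ l - α * p l))
      (fun l _ => (Real.exp_pos _).le) (Finset.mem_univ j)
  rw [logitShare, show (1:ℝ) - Real.exp (δ j - α * p j) / (1 + ∑ l, Real.exp (δ l - α * p l))
      = (1 + ∑ l, Real.exp (δ l - α * p l) - Real.exp (δ j - α * p j))
          / (1 + ∑ l, Real.exp (δ l - α * p l)) by field_simp]
  gcongr
  linarith

lemma logitShare_continuous (p : Fin J → ℝ) : Continuous (fun α => logitShare δ j p α) := by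
  apply Continuous.div
  · fun_prop
  · fun_prop
  · exact fun α => (den_pos p α).ne'

lemma update_den (p : Fin J → ℝ) (t α : ℝ) :
    (1 : ℝ) + ∑ l, Real.exp (δ l - α * Function.update p j t l)
      = 1 + (Real.exp (δ j - α * t) + ∑ l ∈ Finset.univ.erase j, Real.exp (δ l - α * p l)) := by
  congr 1
  rw [← Finset.add_sum_erase _ _ (Finset.mem_univ j), Function.update_self]
  congr 1
  apply Finset.sum_congr rfl
  intro l hl
  rw [Function.update_of_ne (Finset.ne_of_mem_erase hl)]

lemma hasDerivAt_logitShare_update (p : Fin J → ℝ) (α t : ℝ) :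
    HasDerivAt (fun s => logitShare δ j (Function.update p j s) α)
      (-(α * (logitShare δ j (Function.update p j t) α *
        (1 - logitShare δ j (Function.update p j t) α)))) t := by
  set R := ∑ l ∈ Finset.univ.erase j, Real.exp (δ l - α * p l) with hR
  have hR0 : 0 ≤ R := Finset.sum_nonneg fun l _ => (Real.exp_pos _).le
  have hform : ∀ s : ℝ, logitShare δ j (Function.update p j s) α
      = Real.exp (δ j - α * s) / (1 + (Real.exp (δ j - α * s) + R)) := by
    intro s
    rw [logitShare, Function.update_self, update_den]
  have hden : ∀ s : ℝ, (1 : ℝ) + (Real.exp (δ j - α * s) + R) ≠ 0 := by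
    intro s
    have := Real.exp_pos (δ j - α * s)
    positivity
  have hE : HasDerivAt (fun s : ℝ => Real.exp (δ j - α * s))
      (Real.exp (δ j - α * t) * (0 - α)) t := by
    exact (((hasDerivAt_const t (δ j)).sub ((hasDerivAt_id t).const_mul α)).exp).congr_deriv
      (by simp)
  have hD : HasDerivAt (fun s : ℝ => (1:ℝ) + (Real.exp (δ j - α * s) + R))
      (Real.exp (δ j - α * t) * (0 - α)) t := (hE.add_const R).const_add 1
  have h2 := hE.div hD (hden t)
  have hfun : (fun s => Real.exp (δ j - α * s) / (1 + (Real.exp (δ j - α * s) + R)))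
      = (fun s => logitShare δ j (Function.update p j s) α) := by
    funext s; rw [hform]
  simp only [Pi.div_def] at h2
  rw [hfun] at h2
  refine h2.congr_deriv (Eq.symm ?_)
  rw [hform]
  have hd := hden t
  field_simp
  ring
end share



section integr
variable {μ σ : ℝ}

lemma integrableOn_of_bound {g : ℝ → ℝ} (hg : ContinuousOn g (Set.Ioi 0))
    {C c : ℝ} (hc : 0 < c) (hbound : ∀ α ∈ Set.Ioi (0:ℝ), |g α| ≤ C * Real.exp (-c * α)) :
    IntegrableOn g (Set.Ioi 0) := by
  have hint : IntegrableOn (fun α => C * Real.exp (-c * α)) (Set.Ioi 0) :=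
    (exp_neg_integrableOn_Ioi 0 hc).const_mul C
  refine Integrable.mono' hint (hg.aestronglyMeasurable measurableSet_Ioi) ?_
  filter_upwards [ae_restrict_mem measurableSet_Ioi] with α hα
  simpa [Real.norm_eq_abs] using hbound α hα

/-- The integrand of `qLN` is integrable. -/
lemma qLN_integrand_integrable (hσ : 0 < σ) {J : ℕ} (δ : Fin J → ℝ) (j : Fin J)
    (p : Fin J → ℝ) (hp : 0 < p j) :
    IntegrableOn (fun α => logitShare δ j p α * lognormalPdf μ σ α) (Set.Ioi 0) := by
  set C0 := Real.exp (-μ + σ ^ 2 / 2) / (σ * Real.sqrt (2 * Real.pi)) with hC0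
  apply integrableOn_of_bound (C := Real.exp (δ j) * C0) (c := p j)
    (((logitShare_continuous p).continuousOn).mul (lpdf_continuousOn hσ)) hp
  intro α hα
  have hα' : (0:ℝ) < α := hα
  have h1 : 0 < logitShare δ j p α := logitShare_pos p α
  have h2 : logitShare δ j p α ≤ Real.exp (δ j - α * p j) := logitShare_le p α
  have h3 : lognormalPdf μ σ α ≤ C0 := lpdf_le hσ hα'
  have h4 : 0 ≤ lognormalPdf μ σ α := lpdf_nonneg hσ hα'
  show |logitShare δ j p α * lognormalPdf μ σ α| ≤ _
  rw [abs_of_nonneg (mul_nonneg h1.le h4)]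
  calc logitShare δ j p α * lognormalPdf μ σ α
      ≤ Real.exp (δ j - α * p j) * C0 := by
        apply mul_le_mul h2 h3 h4 (Real.exp_pos _).le
    _ = Real.exp (δ j) * C0 * Real.exp (-(p j) * α) := by
        rw [show δ j - α * p j = δ j + -(p j) * α by ring, Real.exp_add]; ring

/-- The integrand of the derivative of `qLN` is integrable, with a uniform exponential bound. -/
lemma deriv_integrand_bound (hσ : 0 < σ) {J : ℕ} (δ : Fin J → ℝ) (j : Fin J)
    (p : Fin J → ℝ) {c : ℝ} (hc : 0 < c) (hcp : c ≤ p j) {α : ℝ} (hα : 0 < α) :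
    |(-(α * (logitShare δ j p α * (1 - logitShare δ j p α)))) * lognormalPdf μ σ α|
      ≤ Real.exp (δ j) * (1 / (σ * Real.sqrt (2 * Real.pi))) * Real.exp (-c * α) := by
  set C1 := 1 / (σ * Real.sqrt (2 * Real.pi)) with hC1
  have h1 : 0 < logitShare δ j p α := logitShare_pos p α
  have h2 : logitShare δ j p α ≤ Real.exp (δ j - α * p j) := logitShare_le p α
  have h2' : logitShare δ j p α < 1 := logitShare_lt_one p α
  have h4 : 0 ≤ lognormalPdf μ σ α := lpdf_nonneg hσ hα
  have h5 : α * lognormalPdf μ σ α ≤ C1 := mul_lpdf_le hσ hα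
  have hX : 0 ≤ logitShare δ j p α * (1 - logitShare δ j p α) := by nlinarith
  rw [neg_mul, abs_neg, abs_of_nonneg (by positivity)]
  calc α * (logitShare δ j p α * (1 - logitShare δ j p α)) * lognormalPdf μ σ α
      ≤ α * Real.exp (δ j - α * p j) * lognormalPdf μ σ α := by
        apply mul_le_mul_of_nonneg_right ?_ h4
        apply mul_le_mul_of_nonneg_left ?_ hα.le
        nlinarith
    _ = Real.exp (δ j) * Real.exp (-(α * p j)) * (α * lognormalPdf μ σ α) := by
        rw [show δ j - α * p j = δ j + -(α * p j) by ring, Real.exp_add]; ring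
    _ ≤ Real.exp (δ j) * Real.exp (-c * α) * C1 := by
        apply mul_le_mul ?_ h5 (by positivity) (by positivity)
        apply mul_le_mul_of_nonneg_left ?_ (Real.exp_pos _).le
        apply Real.exp_le_exp.2
        nlinarith
    _ = Real.exp (δ j) * C1 * Real.exp (-c * α) := by ring

lemma deriv_integrand_integrable (hσ : 0 < σ) {J : ℕ} (δ : Fin J → ℝ) (j : Fin J)
    (p : Fin J → ℝ) (hp : 0 < p j) :
    IntegrableOn (fun α => α * (logitShare δ j p α * (1 - logitShare δ j p α))
      * lognormalPdf μ σ α) (Set.Ioi 0) := by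
  apply integrableOn_of_bound (C := Real.exp (δ j) * (1 / (σ * Real.sqrt (2 * Real.pi))))
    (c := p j) ?_ hp
  · intro α hα
    have := deriv_integrand_bound (μ := μ) hσ δ j p hp le_rfl (α := α) hα
    rwa [neg_mul, abs_neg] at this
  · exact (continuousOn_id.mul ((logitShare_continuous p).continuousOn.mul
      ((continuousOn_const.sub (logitShare_continuous p).continuousOn)))).mul (lpdf_continuousOn hσ)
end integr

section derivs
variable {μ σ : ℝ}

lemma hasDerivAt_qLN (hσ : 0 < σ) {J : ℕ} (δ : Fin J → ℝ) (M : ℝ) (j : Fin J)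
    (p : Fin J → ℝ) (hp : ∀ i, 0 < p i) :
    HasDerivAt (fun t => qLN δ M μ σ j (Function.update p j t))
      (-(M * ∫ α in Set.Ioi (0 : ℝ),
          α * (logitShare δ j p α * (1 - logitShare δ j p α)) * lognormalPdf μ σ α))
      (p j) := by
  set C1 := 1 / (σ * Real.sqrt (2 * Real.pi)) with hC1
  have hpj := hp j
  have hε : 0 < p j / 2 := by linarith
  set F : ℝ → ℝ → ℝ :=
    fun t α => logitShare δ j (Function.update p j t) α * lognormalPdf μ σ α with hF
  set F' : ℝ → ℝ → ℝ := fun t α =>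
    (-(α * (logitShare δ j (Function.update p j t) α *
      (1 - logitShare δ j (Function.update p j t) α)))) * lognormalPdf μ σ α with hF'
  have key := hasDerivAt_integral_of_dominated_loc_of_deriv_le (𝕜 := ℝ)
      (μ := volume.restrict (Set.Ioi (0:ℝ))) (x₀ := p j) (F := F) (F' := F')
      (bound := fun α => Real.exp (δ j) * C1 * Real.exp (-(p j / 2) * α)) (Metric.ball_mem_nhds (p j) hε)
      ?hmeas ?hint ?hmeas' ?hbound ?hbint ?hdiff
  case hmeas =>
    refine Filter.Eventually.of_forall fun t => ?_
    exact (((logitShare_continuous _).continuousOn).mul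
      (lpdf_continuousOn hσ)).aestronglyMeasurable measurableSet_Ioi
  case hint => simpa [hF, Function.update_eq_self, IntegrableOn] using
      qLN_integrand_integrable (μ := μ) hσ δ j p hpj
  case hmeas' =>
    apply ContinuousOn.aestronglyMeasurable ?_ measurableSet_Ioi
    exact ((continuousOn_id.mul ((logitShare_continuous _).continuousOn.mul
      (continuousOn_const.sub (logitShare_continuous _).continuousOn))).neg).mul
      (lpdf_continuousOn hσ)
  case hbound =>
    filter_upwards [ae_restrict_mem measurableSet_Ioi] with α hα
    intro t ht
    have hα' : (0:ℝ) < α := hα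
    have ht' : p j / 2 ≤ Function.update p j t j := by
      rw [Function.update_self]
      have := abs_lt.1 (by simpa [Real.dist_eq] using Metric.mem_ball.1 ht)
      linarith [this.1]
    have := deriv_integrand_bound (μ := μ) hσ δ j (Function.update p j t) hε ht' hα'
    simpa only [hF', Real.norm_eq_abs] using this
  case hbint =>
    exact ((exp_neg_integrableOn_Ioi 0 (by linarith : (0:ℝ) < p j / 2)).const_mul
      (Real.exp (δ j) * C1))
  case hdiff =>
    filter_upwards [ae_restrict_mem measurableSet_Ioi] with α hα
    intro t _
    exact (hasDerivAt_logitShare_update p α t).mul_const (lognormalPdf μ σ α)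
  have h2 := (key.2).const_mul M
  have heq : (fun t => M * ∫ α in Set.Ioi (0:ℝ), F t α)
      = fun t => qLN δ M μ σ j (Function.update p j t) := rfl
  rw [heq] at h2
  refine h2.congr_deriv (Eq.symm ?_)
  rw [show (∫ α in Set.Ioi (0:ℝ), F' (p j) α)
      = ∫ α in Set.Ioi (0:ℝ), -(α * (logitShare δ j p α * (1 - logitShare δ j p α))
          * lognormalPdf μ σ α) by
    apply setIntegral_congr_fun measurableSet_Ioi
    intro α _
    simp [hF', Function.update_eq_self]]
  rw [integral_neg]
  ring
end derivs

section laplace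
variable {μ σ : ℝ}

lemma laplace_integrand_integrable (hσ : 0 < σ) {x : ℝ} (hx : 0 < x) :
    IntegrableOn (fun α => Real.exp (-α * x) * lognormalPdf μ σ α) (Set.Ioi 0) := by
  set C0 := Real.exp (-μ + σ ^ 2 / 2) / (σ * Real.sqrt (2 * Real.pi)) with hC0
  refine integrableOn_of_bound (C := C0) (c := x) ?_ hx ?_
  · exact (Real.continuous_exp.comp (continuous_id.neg.mul continuous_const)).continuousOn.mul
      (lpdf_continuousOn hσ)
  intro α hα
  have hα' : (0:ℝ) < α := hα
  have h3 : lognormalPdf μ σ α ≤ C0 := lpdf_le hσ hα'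
  have h4 : 0 ≤ lognormalPdf μ σ α := lpdf_nonneg hσ hα'
  rw [abs_of_nonneg (mul_nonneg (Real.exp_pos _).le h4), show -x * α = -α * x by ring]
  exact (mul_le_mul_of_nonneg_left h3 (Real.exp_pos _).le).trans_eq (mul_comm _ _)

lemma I0_integrand_bound (hσ : 0 < σ) {x c : ℝ} (hc : 0 < c) (hcx : c ≤ x) {α : ℝ}
    (hα : 0 < α) :
    |α * Real.exp (-α * x) * lognormalPdf μ σ α|
      ≤ 1 / (σ * Real.sqrt (2 * Real.pi)) * Real.exp (-c * α) := by
  have h4 : 0 ≤ lognormalPdf μ σ α := lpdf_nonneg hσ hα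
  have h5 : α * lognormalPdf μ σ α ≤ 1 / (σ * Real.sqrt (2 * Real.pi)) := mul_lpdf_le hσ hα
  rw [abs_of_nonneg (by positivity)]
  calc α * Real.exp (-α * x) * lognormalPdf μ σ α
      = Real.exp (-α * x) * (α * lognormalPdf μ σ α) := by ring
    _ ≤ Real.exp (-c * α) * (1 / (σ * Real.sqrt (2 * Real.pi))) := by
        apply mul_le_mul ?_ h5 (by positivity) (Real.exp_pos _).le
        apply Real.exp_le_exp.2
        nlinarith
    _ = 1 / (σ * Real.sqrt (2 * Real.pi)) * Real.exp (-c * α) := by ring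

lemma I0_integrable (hσ : 0 < σ) {x : ℝ} (hx : 0 < x) :
    IntegrableOn (fun α => α * Real.exp (-α * x) * lognormalPdf μ σ α) (Set.Ioi 0) := by
  apply integrableOn_of_bound (C := 1 / (σ * Real.sqrt (2 * Real.pi))) (c := x)
    ((continuousOn_id.mul (Real.continuous_exp.comp
      (continuous_id.neg.mul continuous_const)).continuousOn).mul (lpdf_continuousOn hσ)) hx
  exact fun α hα => I0_integrand_bound hσ hx le_rfl hα

lemma I0_pos (hσ : 0 < σ) {x : ℝ} (hx : 0 < x) :
    0 < ∫ α in Set.Ioi (0:ℝ), α * Real.exp (-α * x) * lognormalPdf μ σ α := by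
  rw [setIntegral_pos_iff_support_of_nonneg_ae]
  · have hsub : Set.Ioi (0:ℝ) ⊆ Function.support
        (fun α => α * Real.exp (-α * x) * lognormalPdf μ σ α) := by
      intro α hα
      have hα' : (0:ℝ) < α := hα
      have := lpdf_pos (μ := μ) hσ hα'
      have h := Real.exp_pos (-α * x)
      exact ne_of_gt (by positivity)
    rw [Set.inter_eq_right.2 hsub, Real.volume_Ioi]
    exact ENNReal.zero_lt_top
  · filter_upwards [ae_restrict_mem measurableSet_Ioi] with α hα
    have hα' : (0:ℝ) < α := hα
    have := lpdf_nonneg (μ := μ) hσ hα'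
    have h := Real.exp_pos (-α * x)
    positivity
  · exact I0_integrable hσ hx

lemma hasDerivAt_lnLaplace (hσ : 0 < σ) {x : ℝ} (hx : 0 < x) :
    HasDerivAt (lnLaplace μ σ)
      (-(∫ α in Set.Ioi (0:ℝ), α * Real.exp (-α * x) * lognormalPdf μ σ α)) x := by
  set C1 := 1 / (σ * Real.sqrt (2 * Real.pi)) with hC1
  have hε : 0 < x / 2 := by linarith
  set F : ℝ → ℝ → ℝ := fun t α => Real.exp (-α * t) * lognormalPdf μ σ α with hF
  set F' : ℝ → ℝ → ℝ := fun t α => (-(α * Real.exp (-α * t))) * lognormalPdf μ σ α with hF'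
  have key := hasDerivAt_integral_of_dominated_loc_of_deriv_le (𝕜 := ℝ)
      (μ := volume.restrict (Set.Ioi (0:ℝ))) (x₀ := x) (F := F) (F' := F')
      (bound := fun α => C1 * Real.exp (-(x / 2) * α)) (Metric.ball_mem_nhds x hε)
      ?hmeas ?hint ?hmeas' ?hbound ?hbint ?hdiff
  case hmeas =>
    refine Filter.Eventually.of_forall fun t => ?_
    exact ((Real.continuous_exp.comp (continuous_id.neg.mul continuous_const)).continuousOn.mul
      (lpdf_continuousOn hσ)).aestronglyMeasurable measurableSet_Ioi
  case hint => exact laplace_integrand_integrable hσ hx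
  case hmeas' =>
    apply ContinuousOn.aestronglyMeasurable ?_ measurableSet_Ioi
    exact ((continuous_id.mul (Real.continuous_exp.comp
      (continuous_id.neg.mul continuous_const))).neg.continuousOn).mul (lpdf_continuousOn hσ)
  case hbound =>
    filter_upwards [ae_restrict_mem measurableSet_Ioi] with α hα
    intro t ht
    have hα' : (0:ℝ) < α := hα
    have ht' : x / 2 ≤ t := by
      have := abs_lt.1 (by simpa [Real.dist_eq] using Metric.mem_ball.1 ht)
      linarith [this.1]
    have := I0_integrand_bound (μ := μ) hσ hε ht' hα'
    rw [Real.norm_eq_abs]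
    calc |F' t α| = |α * Real.exp (-α * t) * lognormalPdf μ σ α| := by
          rw [hF']; simp [abs_mul, mul_assoc]
      _ ≤ C1 * Real.exp (-(x / 2) * α) := this
  case hbint =>
    exact (exp_neg_integrableOn_Ioi 0 hε).const_mul C1
  case hdiff =>
    filter_upwards [ae_restrict_mem measurableSet_Ioi] with α hα
    intro t _
    have h1 : HasDerivAt (fun s : ℝ => Real.exp (-α * s)) (Real.exp (-α * t) * (-α * 1)) t :=
      ((hasDerivAt_id t).const_mul (-α)).exp
    have h2 := h1.mul_const (lognormalPdf μ σ α)
    show HasDerivAt (fun s : ℝ => Real.exp (-α * s) * lognormalPdf μ σ α) (F' t α) t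
    refine h2.congr_deriv (Eq.symm ?_)
    simp only [hF']
    ring
  have h2 := key.2
  have heq : (fun t => ∫ α in Set.Ioi (0:ℝ), F t α) = lnLaplace μ σ := rfl
  rw [heq] at h2
  refine h2.congr_deriv (Eq.symm ?_)
  rw [← integral_neg]
  apply setIntegral_congr_fun measurableSet_Ioi
  intro α _
  simp [hF']

lemma deriv_lnLaplace (hσ : 0 < σ) {x : ℝ} (hx : 0 < x) :
    deriv (lnLaplace μ σ) x
      = -(∫ α in Set.Ioi (0:ℝ), α * Real.exp (-α * x) * lognormalPdf μ σ α) :=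
  (hasDerivAt_lnLaplace hσ hx).deriv
end laplace

section compare
variable {μ σ : ℝ}

lemma mul_lpdf_eq (hσ : 0 < σ) {α : ℝ} (hα : 0 < α) :
    α * lognormalPdf μ σ α
      = Real.exp (-(Real.log α - μ) ^ 2 / (2 * σ ^ 2)) / (σ * Real.sqrt (2 * Real.pi)) := by
  rw [lpdf_eq hα, show -Real.log α - (Real.log α - μ) ^ 2 / (2 * σ ^ 2)
      = (-(Real.log α - μ) ^ 2 / (2 * σ ^ 2)) + -Real.log α by ring, Real.exp_add,
    Real.exp_neg (Real.log α), Real.exp_log hα]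
  have h2 : σ * Real.sqrt (2 * Real.pi) ≠ 0 := by
    have := sqrt2pi_pos; positivity
  field_simp

lemma N_le (hσ : 0 < σ) {J : ℕ} (δ : Fin J → ℝ) (j : Fin J) (q : Fin J → ℝ)
    (hq : ∀ i, 0 < q i) :
    (∫ α in Set.Ioi (0:ℝ), α * (logitShare δ j q α * (1 - logitShare δ j q α))
        * lognormalPdf μ σ α)
      ≤ Real.exp (δ j) * ∫ α in Set.Ioi (0:ℝ), α * Real.exp (-α * q j) * lognormalPdf μ σ α := by
  rw [← integral_const_mul]
  apply setIntegral_mono_on (deriv_integrand_integrable hσ δ j q (hq j))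
    ((I0_integrable hσ (hq j)).const_mul _) measurableSet_Ioi
  intro α hα
  have hα' : (0:ℝ) < α := hα
  have hf : 0 ≤ lognormalPdf μ σ α := lpdf_nonneg hσ hα'
  have hs0 : 0 < logitShare δ j q α := logitShare_pos q α
  have hs1 : logitShare δ j q α < 1 := logitShare_lt_one q α
  have hle : logitShare δ j q α ≤ Real.exp (δ j - α * q j) := logitShare_le q α
  have key : logitShare δ j q α * (1 - logitShare δ j q α)
      ≤ Real.exp (δ j) * Real.exp (-α * q j) := by
    have : Real.exp (δ j - α * q j) = Real.exp (δ j) * Real.exp (-α * q j) := by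
      rw [show δ j - α * q j = δ j + -α * q j by ring, Real.exp_add]
    nlinarith
  calc α * (logitShare δ j q α * (1 - logitShare δ j q α)) * lognormalPdf μ σ α
      ≤ α * (Real.exp (δ j) * Real.exp (-α * q j)) * lognormalPdf μ σ α := by
        apply mul_le_mul_of_nonneg_right (mul_le_mul_of_nonneg_left key hα'.le) hf
    _ = Real.exp (δ j) * (α * Real.exp (-α * q j) * lognormalPdf μ σ α) := by ring

lemma split_Ioi {g : ℝ → ℝ} (hg : IntegrableOn g (Set.Ioi 0)) {c : ℝ} (hc : 0 < c) :
    ∫ α in Set.Ioi (0:ℝ), g α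
      = (∫ α in Set.Ioc (0:ℝ) c, g α) + ∫ α in Set.Ioi c, g α := by
  rw [← Set.Ioc_union_Ioi_eq_Ioi hc.le]
  exact setIntegral_union (Set.Ioc_disjoint_Ioi le_rfl) measurableSet_Ioi
    (hg.mono_set Set.Ioc_subset_Ioi_self) (hg.mono_set (Set.Ioi_subset_Ioi hc.le))

lemma N_ge (hσ : 0 < σ) {J : ℕ} (δ : Fin J → ℝ) (j : Fin J) (q : Fin J → ℝ)
    (hq : ∀ i, 0 < q i) {c S e : ℝ} (hc : 0 < c) (hS : 0 ≤ S) (he : e ≤ 1)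
    (hD : ∀ α : ℝ, c < α → ∑ i, Real.exp (δ i - α * q i) ≤ S)
    (hs : ∀ α : ℝ, c < α → Real.exp (δ j - α * q j) ≤ e) :
    (1 - e) / (1 + S) * Real.exp (δ j) *
        ((∫ α in Set.Ioi (0:ℝ), α * Real.exp (-α * q j) * lognormalPdf μ σ α)
          - ∫ α in Set.Ioc (0:ℝ) c, α * Real.exp (-α * q j) * lognormalPdf μ σ α)
      ≤ ∫ α in Set.Ioi (0:ℝ), α * (logitShare δ j q α * (1 - logitShare δ j q α))
          * lognormalPdf μ σ α := by
  have hqj := hq j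
  have hI := I0_integrable (μ := μ) hσ hqj
  have hNint := deriv_integrand_integrable (μ := μ) hσ δ j q hqj
  rw [split_Ioi hI hc, show ∀ a b : ℝ, a + b - a = b from fun a b => by ring]
  have step1 : (∫ α in Set.Ioi c, α * (logitShare δ j q α * (1 - logitShare δ j q α))
        * lognormalPdf μ σ α)
      ≤ ∫ α in Set.Ioi (0:ℝ), α * (logitShare δ j q α * (1 - logitShare δ j q α))
        * lognormalPdf μ σ α := by
    apply setIntegral_mono_set hNint ?_ ((Set.Ioi_subset_Ioi hc.le).eventuallyLE)
    filter_upwards [ae_restrict_mem measurableSet_Ioi] with α hα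
    have hα' : (0:ℝ) < α := hα
    have hf : 0 ≤ lognormalPdf μ σ α := lpdf_nonneg hσ hα'
    have hs0 : 0 < logitShare δ j q α := logitShare_pos q α
    have hs1 : logitShare δ j q α < 1 := logitShare_lt_one q α
    have : (0:ℝ) ≤ logitShare δ j q α * (1 - logitShare δ j q α) := by nlinarith
    positivity
  refine le_trans ?_ step1
  rw [← integral_const_mul]
  apply setIntegral_mono_on ((hI.mono_set (Set.Ioi_subset_Ioi hc.le)).const_mul _)
    (hNint.mono_set (Set.Ioi_subset_Ioi hc.le)) measurableSet_Ioi
  intro α hα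
  have hα' : (0:ℝ) < α := lt_trans hc hα
  have hf : 0 ≤ lognormalPdf μ σ α := lpdf_nonneg hσ hα'
  have hs0 : 0 < logitShare δ j q α := logitShare_pos q α
  have hSd : 0 < 1 + S := by linarith
  have h1 : Real.exp (δ j - α * q j) / (1 + S) ≤ logitShare δ j q α := by
    rw [logitShare]
    gcongr
    exact hD α hα
  have h2 : 1 - e ≤ 1 - logitShare δ j q α := by
    have := (logitShare_le q α).trans (hs α hα)
    linarith
  have hAB : Real.exp (δ j - α * q j) / (1 + S) * (1 - e)
      ≤ logitShare δ j q α * (1 - logitShare δ j q α) :=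
    mul_le_mul h1 h2 (by linarith) hs0.le
  calc (1 - e) / (1 + S) * Real.exp (δ j) * (α * Real.exp (-α * q j) * lognormalPdf μ σ α)
      = α * (Real.exp (δ j - α * q j) / (1 + S) * (1 - e)) * lognormalPdf μ σ α := by
        rw [show δ j - α * q j = δ j + -α * q j by ring, Real.exp_add]
        field_simp
    _ ≤ α * (logitShare δ j q α * (1 - logitShare δ j q α)) * lognormalPdf μ σ α := by
        apply mul_le_mul_of_nonneg_right (mul_le_mul_of_nonneg_left hAB hα'.le) hf
end compare

section limitlemma
variable {μ σ : ℝ}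

lemma J_upper (hσ : 0 < σ) {T x : ℝ} (hT : 0 < T) (hx : 0 < x)
    (hcond : Real.log (T / x) ≤ μ) :
    (∫ α in Set.Ioc (0:ℝ) (T / x), α * Real.exp (-α * x) * lognormalPdf μ σ α)
      ≤ (T / x) * (Real.exp (-(Real.log (T / x) - μ) ^ 2 / (2 * σ ^ 2))
          / (σ * Real.sqrt (2 * Real.pi))) := by
  have ha : 0 < T / x := div_pos hT hx
  have hint : IntegrableOn (fun α => α * Real.exp (-α * x) * lognormalPdf μ σ α)
      (Set.Ioc 0 (T / x)) := (I0_integrable hσ hx).mono_set Set.Ioc_subset_Ioi_self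
  have hmono : ∀ α ∈ Set.Ioc (0:ℝ) (T / x),
      α * Real.exp (-α * x) * lognormalPdf μ σ α
        ≤ Real.exp (-(Real.log (T / x) - μ) ^ 2 / (2 * σ ^ 2)) / (σ * Real.sqrt (2 * Real.pi)) := by
    intro α hα
    have hα0 : 0 < α := hα.1
    have hf : 0 ≤ lognormalPdf μ σ α := lpdf_nonneg hσ hα0
    have he1 : Real.exp (-α * x) ≤ 1 := Real.exp_le_one_iff.2 (by nlinarith)
    have hlog : Real.log α ≤ Real.log (T / x) := Real.log_le_log hα0 hα.2
    calc α * Real.exp (-α * x) * lognormalPdf μ σ α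
        ≤ α * 1 * lognormalPdf μ σ α := by
          apply mul_le_mul_of_nonneg_right (mul_le_mul_of_nonneg_left he1 hα0.le) hf
      _ = α * lognormalPdf μ σ α := by ring
      _ = Real.exp (-(Real.log α - μ) ^ 2 / (2 * σ ^ 2)) / (σ * Real.sqrt (2 * Real.pi)) :=
          mul_lpdf_eq hσ hα0
      _ ≤ Real.exp (-(Real.log (T / x) - μ) ^ 2 / (2 * σ ^ 2)) / (σ * Real.sqrt (2 * Real.pi)) := by
          have h2 : 0 < σ * Real.sqrt (2 * Real.pi) := by have := sqrt2pi_pos; positivity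
          gcongr Real.exp ?_ / _
          have hσ2 : (0:ℝ) < 2 * σ ^ 2 := by positivity
          rw [div_le_div_iff₀ hσ2 hσ2]
          nlinarith [mul_nonneg (sub_nonneg.2 hlog) (sub_nonneg.2 hcond),
            mul_nonneg (sub_nonneg.2 hlog) (sub_nonneg.2 (hlog.trans hcond)), hσ2.le]
  calc (∫ α in Set.Ioc (0:ℝ) (T / x), α * Real.exp (-α * x) * lognormalPdf μ σ α)
      ≤ ∫ _α in Set.Ioc (0:ℝ) (T / x),
          (Real.exp (-(Real.log (T / x) - μ) ^ 2 / (2 * σ ^ 2)) / (σ * Real.sqrt (2 * Real.pi))) :=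
        setIntegral_mono_on hint (integrableOn_const (by
          rw [Real.volume_Ioc]; exact ENNReal.ofReal_ne_top)) measurableSet_Ioc hmono
    _ = (T / x) * (Real.exp (-(Real.log (T / x) - μ) ^ 2 / (2 * σ ^ 2))
          / (σ * Real.sqrt (2 * Real.pi))) := by
        rw [setIntegral_const, Real.volume_real_Ioc_of_le ha.le, smul_eq_mul]
        congr 1
        ring

lemma I0_lower (hσ : 0 < σ) {x : ℝ} (hx1 : 1 < x)
    (hcond : Real.log (2 * (Real.log x / x)) ≤ μ) :
    (Real.log x / x) * (Real.exp (-(2 * Real.log x))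
        * (Real.exp (-(Real.log (Real.log x / x) - μ) ^ 2 / (2 * σ ^ 2))
          / (σ * Real.sqrt (2 * Real.pi))))
      ≤ ∫ α in Set.Ioi (0:ℝ), α * Real.exp (-α * x) * lognormalPdf μ σ α := by
  have hx0 : (0:ℝ) < x := by linarith
  have hu : 0 < Real.log x := Real.log_pos hx1
  set u := Real.log x with hudef
  set a := u / x with hadef
  have ha : 0 < a := div_pos hu hx0
  have hax : a * x = u := div_mul_cancel₀ u hx0.ne'
  have hsub : Set.Ioc a (2 * a) ⊆ Set.Ioi (0:ℝ) := fun α hα => lt_trans ha hα.1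
  have hI := I0_integrable (μ := μ) hσ hx0
  have step2 : (Real.log x / x) * (Real.exp (-(2 * Real.log x))
        * (Real.exp (-(Real.log (Real.log x / x) - μ) ^ 2 / (2 * σ ^ 2))
          / (σ * Real.sqrt (2 * Real.pi))))
      ≤ ∫ α in Set.Ioc a (2 * a), α * Real.exp (-α * x) * lognormalPdf μ σ α := by
    have hmono : ∀ α ∈ Set.Ioc a (2 * a),
        Real.exp (-(2 * u)) * (Real.exp (-(Real.log a - μ) ^ 2 / (2 * σ ^ 2))
          / (σ * Real.sqrt (2 * Real.pi)))
          ≤ α * Real.exp (-α * x) * lognormalPdf μ σ α := by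
      intro α hα
      have hα0 : 0 < α := lt_trans ha hα.1
      have hloga : Real.log a ≤ Real.log α := Real.log_le_log ha hα.1.le
      have hloga2 : Real.log α ≤ Real.log (2 * a) := Real.log_le_log hα0 hα.2
      have hexp1 : Real.exp (-(2 * u)) ≤ Real.exp (-α * x) := by
        apply Real.exp_le_exp.2
        nlinarith [mul_le_mul_of_nonneg_right hα.2 hx0.le, hax]
      have hexp2 : Real.exp (-(Real.log a - μ) ^ 2 / (2 * σ ^ 2))
          ≤ Real.exp (-(Real.log α - μ) ^ 2 / (2 * σ ^ 2)) := by
        apply Real.exp_le_exp.2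
        have hσ2 : (0:ℝ) < 2 * σ ^ 2 := by positivity
        have hb : Real.log α ≤ μ := hloga2.trans hcond
        rw [div_le_div_iff₀ hσ2 hσ2]
        nlinarith [mul_nonneg (sub_nonneg.2 hloga) (sub_nonneg.2 hb),
          mul_nonneg (sub_nonneg.2 hloga) (sub_nonneg.2 (hloga.trans hb)), hσ2.le]
      have h2 : 0 < σ * Real.sqrt (2 * Real.pi) := by have := sqrt2pi_pos; positivity
      calc Real.exp (-(2 * u)) * (Real.exp (-(Real.log a - μ) ^ 2 / (2 * σ ^ 2))
            / (σ * Real.sqrt (2 * Real.pi)))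
          ≤ Real.exp (-α * x) * (Real.exp (-(Real.log α - μ) ^ 2 / (2 * σ ^ 2))
            / (σ * Real.sqrt (2 * Real.pi))) := by
            apply mul_le_mul hexp1 (by gcongr) (by positivity) (Real.exp_pos _).le
        _ = Real.exp (-α * x) * (α * lognormalPdf μ σ α) := by rw [mul_lpdf_eq hσ hα0]
        _ = α * Real.exp (-α * x) * lognormalPdf μ σ α := by ring
    calc (Real.log x / x) * (Real.exp (-(2 * Real.log x))
          * (Real.exp (-(Real.log (Real.log x / x) - μ) ^ 2 / (2 * σ ^ 2))
            / (σ * Real.sqrt (2 * Real.pi))))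
        = ∫ _α in Set.Ioc a (2 * a), (Real.exp (-(2 * u))
            * (Real.exp (-(Real.log a - μ) ^ 2 / (2 * σ ^ 2))
              / (σ * Real.sqrt (2 * Real.pi)))) := by
          rw [setIntegral_const, Real.volume_real_Ioc_of_le (by linarith : a ≤ 2 * a), smul_eq_mul]
          rw [show 2 * a - a = a by ring]
      _ ≤ ∫ α in Set.Ioc a (2 * a), α * Real.exp (-α * x) * lognormalPdf μ σ α :=
          setIntegral_mono_on (integrableOn_const (by
            rw [Real.volume_Ioc]; exact ENNReal.ofReal_ne_top))
            (hI.mono_set hsub) measurableSet_Ioc hmono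
  refine step2.trans (setIntegral_mono_set hI ?_ hsub.eventuallyLE)
  filter_upwards [ae_restrict_mem measurableSet_Ioi] with α hα
  have hα' : (0:ℝ) < α := hα
  have := lpdf_nonneg (μ := μ) hσ hα'
  have h := (Real.exp_pos (-α * x)).le
  positivity

lemma log_le_half {y : ℝ} (hy : 16 ≤ y) : Real.log y ≤ y / 2 := by
  have hy0 : (0:ℝ) < y := by linarith
  have hs4 : 4 ≤ Real.sqrt y := by
    rw [show (4:ℝ) = Real.sqrt 16 by rw [show (16:ℝ) = 4 ^ 2 by norm_num, Real.sqrt_sq]; norm_num]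
    exact Real.sqrt_le_sqrt hy
  have hs0 : 0 < Real.sqrt y := by linarith
  have hlog : Real.log y = 2 * Real.log (Real.sqrt y) := by
    rw [Real.log_sqrt hy0.le]; ring
  have h1 : Real.log (Real.sqrt y) ≤ Real.sqrt y - 1 := Real.log_le_sub_one_of_pos hs0
  have hsq : Real.sqrt y * Real.sqrt y = y := Real.mul_self_sqrt hy0.le
  nlinarith
end limitlemma

lemma keyineq {σ u v lT m : ℝ} (hσ : 0 < σ) (hu0 : 0 < u) (hv0 : 0 < v)
    (hfac1 : lT - v ≤ -(v / 2)) (hfac2 : u ≤ 2 * (u + m) - v - lT) (hv12 : 12 * σ ^ 2 ≤ v) :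
    -(lT - u - m) ^ 2 / (2 * σ ^ 2) ≤ v - u + (-(2 * u) + -(v - u - m) ^ 2 / (2 * σ ^ 2)) := by
  have hσ2 : (0:ℝ) < 2 * σ ^ 2 := by positivity
  have hprod : (v - u - m) ^ 2 - (lT - u - m) ^ 2 ≤ -(v / 2) * u := by
    have hexpand : (v - u - m) ^ 2 - (lT - u - m) ^ 2
        = (lT - v) * (2 * (u + m) - v - lT) := by ring
    rw [hexpand]
    calc (lT - v) * (2 * (u + m) - v - lT)
        ≤ (-(v / 2)) * (2 * (u + m) - v - lT) :=
          mul_le_mul_of_nonneg_right hfac1 (by linarith)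
      _ ≤ -(v / 2) * u := mul_le_mul_of_nonpos_left hfac2 (by linarith)
  have hgoal : (v - u - m) ^ 2 - (lT - u - m) ^ 2 ≤ (v - 3 * u) * (2 * σ ^ 2) := by
    nlinarith [hprod, mul_le_mul_of_nonneg_left hv12 hu0.le, mul_nonneg hσ2.le hv0.le]
  have hdiv : ((v - u - m) ^ 2 - (lT - u - m) ^ 2) / (2 * σ ^ 2) ≤ v - 3 * u :=
    (div_le_iff₀ hσ2).2 hgoal
  rw [sub_div] at hdiv
  have e1 : -(lT - u - m) ^ 2 / (2 * σ ^ 2) = -((lT - u - m) ^ 2 / (2 * σ ^ 2)) := by ring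
  have e2 : -(v - u - m) ^ 2 / (2 * σ ^ 2) = -((v - u - m) ^ 2 / (2 * σ ^ 2)) := by ring
  rw [e1, e2]
  linarith

section ratio
variable {μ σ : ℝ}

lemma ratio_tendsto (hσ : 0 < σ) {T : ℝ} (hT : 0 < T) :
    Tendsto (fun x => (∫ α in Set.Ioc (0:ℝ) (T / x), α * Real.exp (-α * x) * lognormalPdf μ σ α)
      / (∫ α in Set.Ioi (0:ℝ), α * Real.exp (-α * x) * lognormalPdf μ σ α))
      atTop (nhds 0) := by
  set c₃ : ℝ := |Real.log T| + 2 * |μ| + Real.log 2 + 1 with hc₃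
  have hc₃0 : 0 < c₃ := by
    have := abs_nonneg (Real.log T); have := abs_nonneg μ
    have h2 : (0:ℝ) < Real.log 2 := Real.log_pos (by norm_num)
    positivity
  have hK : 0 < σ * Real.sqrt (2 * Real.pi) := by have := sqrt2pi_pos; positivity
  have hσ2 : (0:ℝ) < 2 * σ ^ 2 := by positivity
  have hbound : ∀ᶠ x in atTop,
      (∫ α in Set.Ioc (0:ℝ) (T / x), α * Real.exp (-α * x) * lognormalPdf μ σ α)
      / (∫ α in Set.Ioi (0:ℝ), α * Real.exp (-α * x) * lognormalPdf μ σ α) ≤ T * x⁻¹ := by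
    filter_upwards [eventually_gt_atTop (1:ℝ),
      tendsto_log_atTop.eventually_ge_atTop (16:ℝ),
      tendsto_log_atTop.eventually_ge_atTop (2 * c₃),
      tendsto_log_atTop.eventually_ge_atTop (Real.log T - μ),
      (tendsto_log_atTop.comp tendsto_log_atTop).eventually_ge_atTop
        (2 * |Real.log T| + 2),
      (tendsto_log_atTop.comp tendsto_log_atTop).eventually_ge_atTop (12 * σ ^ 2)]
      with x hx1 hu16 huc hu4 hv2 hv12
    have hx0 : (0:ℝ) < x := by linarith
    set u := Real.log x with hudef
    have hu0 : (0:ℝ) < u := by simp only [hudef]; exact Real.log_pos hx1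
    set v := Real.log u with hvdef
    have hv2' : 2 * |Real.log T| + 2 ≤ v := hv2
    have hv12' : 12 * σ ^ 2 ≤ v := hv12
    have hv0 : 0 < v := by
      have := abs_nonneg (Real.log T); linarith
    have ha : 0 < u / x := div_pos hu0 hx0
    have hlogTx : Real.log (T / x) = Real.log T - u := Real.log_div hT.ne' hx0.ne'
    have hav : Real.log (u / x) = v - u := Real.log_div hu0.ne' hx0.ne'
    have huv : c₃ ≤ u - v := by
      have hhalf : v ≤ u / 2 := log_le_half hu16
      linarith
    have hcond1 : Real.log (T / x) ≤ μ := by rw [hlogTx]; linarith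
    have hcond2 : Real.log (2 * (u / x)) ≤ μ := by
      rw [Real.log_mul (by norm_num) ha.ne', hav]
      have h1 : -|μ| ≤ μ := neg_abs_le μ
      simp only [hc₃] at huv
      linarith [abs_nonneg (Real.log T), abs_nonneg μ]
    have hnum := J_upper hσ hT hx0 hcond1
    have hden := I0_lower hσ hx1 hcond2
    rw [← hudef] at hden
    have hdenpos := I0_pos (μ := μ) hσ hx0
    set AQ := Real.exp (-(Real.log (T / x) - μ) ^ 2 / (2 * σ ^ 2)) with hAQ
    set BQ := Real.exp (-(Real.log (u / x) - μ) ^ 2 / (2 * σ ^ 2)) with hBQ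
    have hdenBpos : 0 < (u / x) * (Real.exp (-(2 * u))
        * (BQ / (σ * Real.sqrt (2 * Real.pi)))) := by
      have hBQp : 0 < BQ := Real.exp_pos _
      positivity
    have hnum0 : 0 ≤ ∫ α in Set.Ioc (0:ℝ) (T / x),
        α * Real.exp (-α * x) * lognormalPdf μ σ α := by
      apply setIntegral_nonneg measurableSet_Ioc
      intro α hα
      have hα' : 0 < α := hα.1
      have := lpdf_nonneg (μ := μ) hσ hα'
      have h := (Real.exp_pos (-α * x)).le
      positivity
    have step1 : (∫ α in Set.Ioc (0:ℝ) (T / x), α * Real.exp (-α * x) * lognormalPdf μ σ α)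
        / (∫ α in Set.Ioi (0:ℝ), α * Real.exp (-α * x) * lognormalPdf μ σ α)
        ≤ ((T / x) * (AQ / (σ * Real.sqrt (2 * Real.pi))))
          / ((u / x) * (Real.exp (-(2 * u)) * (BQ / (σ * Real.sqrt (2 * Real.pi))))) :=
      div_le_div₀ (by have := Real.exp_pos (-(Real.log (T / x) - μ) ^ 2 / (2 * σ ^ 2)); positivity)
        hnum hdenBpos hden
    refine step1.trans ?_
    rw [div_le_iff₀ hdenBpos]
    have hux : u / x = Real.exp (v - u) := by rw [← hav, Real.exp_log ha]
    have key : AQ ≤ Real.exp (v - u) * (Real.exp (-(2 * u)) * BQ) := by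
      rw [hAQ, hBQ, ← Real.exp_add, ← Real.exp_add, Real.exp_le_exp, hlogTx, hav]
      have hfac1 : Real.log T - v ≤ -(v / 2) := by
        have h2 : Real.log T ≤ |Real.log T| := le_abs_self _
        linarith
      have hfac2 : u ≤ 2 * (u + μ) - v - Real.log T := by
        have h1 : -|μ| ≤ μ := neg_abs_le μ
        have h2 : Real.log T ≤ |Real.log T| := le_abs_self _
        simp only [hc₃] at huv
        linarith [Real.log_pos (show (1:ℝ) < 2 by norm_num), abs_nonneg (Real.log T),
          abs_nonneg μ]
      exact keyineq hσ hu0 hv0 hfac1 hfac2 hv12'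
    calc (T / x) * (AQ / (σ * Real.sqrt (2 * Real.pi)))
        ≤ (T / x) * ((Real.exp (v - u) * (Real.exp (-(2 * u)) * BQ))
            / (σ * Real.sqrt (2 * Real.pi))) := by gcongr
      _ = T * x⁻¹ * ((u / x) * (Real.exp (-(2 * u)) * (BQ / (σ * Real.sqrt (2 * Real.pi))))) := by
          rw [hux, div_eq_mul_inv T x]
          ring
  have hnonneg : ∀ᶠ x in atTop, (0:ℝ) ≤
      (∫ α in Set.Ioc (0:ℝ) (T / x), α * Real.exp (-α * x) * lognormalPdf μ σ α)
      / (∫ α in Set.Ioi (0:ℝ), α * Real.exp (-α * x) * lognormalPdf μ σ α) := by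
    filter_upwards [eventually_gt_atTop (0:ℝ)] with x hx0
    apply div_nonneg ?_ (I0_pos (μ := μ) hσ hx0).le
    apply setIntegral_nonneg measurableSet_Ioc
    intro α hα
    have hα' : 0 < α := hα.1
    have := lpdf_nonneg (μ := μ) hσ hα'
    have h := (Real.exp_pos (-α * x)).le
    positivity
  have hTmono : Tendsto (fun x : ℝ => T * x⁻¹) atTop (nhds 0) := by
    simpa using tendsto_inv_atTop_zero.const_mul T
  exact tendsto_of_tendsto_of_tendsto_of_le_of_le' tendsto_const_nhds hTmono hnonneg hbound
end ratio



set_option maxHeartbeats 1600000 in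
/-- `q_j` is differentiable in `p_j` on `ℝ_{++}^J` with
`∂_{p_j} q_j(p) = −M ∫ α σ_j(p,α)(1−σ_j(p,α)) f(α) dα`, and along any ray
`(−∂_{p_j} q_j(λp)) / (M e^{δ_j} (−L'(λ p_j))) → 1` as `λ → ∞`. -/
theorem qLN_own_deriv_ray_asymptotics {J : ℕ} (hJ : 1 ≤ J) (M : ℝ) (hM : 0 < M)
    (δ : Fin J → ℝ) (μ σ : ℝ) (hσ : 0 < σ) (j : Fin J) :
    (∀ p : Fin J → ℝ, (∀ i, 0 < p i) →
      HasDerivAt (fun t => qLN δ M μ σ j (Function.update p j t))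
        (-(M * ∫ α in Set.Ioi (0 : ℝ),
            α * (logitShare δ j p α * (1 - logitShare δ j p α)) * lognormalPdf μ σ α))
        (p j)) ∧
    (∀ p : Fin J → ℝ, (∀ i, 0 < p i) →
      Tendsto (fun l : ℝ =>
          (-(pd (qLN δ M μ σ j) j (l • p))) /
            (M * Real.exp (δ j) * (-(deriv (lnLaplace μ σ) (l * p j)))))
        atTop (nhds 1)) := by
  constructor
  · exact fun p hp => hasDerivAt_qLN hσ δ M j p hp
  intro p hp
  have hpj := hp j
  rw [Metric.tendsto_nhds]
  intro ε hε
  set ε' : ℝ := min (ε / 4) (1 / 2) with hε'def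
  have hε'0 : 0 < ε' := lt_min (by linarith) (by norm_num)
  have hε'4 : ε' ≤ ε / 4 := min_le_left _ _
  have hε'h : ε' ≤ 1 / 2 := min_le_right _ _
  -- choose T
  have hexpT : ∀ i : Fin J, Tendsto (fun T : ℝ => Real.exp (δ i - T * p i)) atTop (nhds 0) := by
    intro i
    apply Real.tendsto_exp_atBot.comp
    have h1 : Tendsto (fun T : ℝ => T * p i) atTop atTop := tendsto_id.atTop_mul_const (hp i)
    have h2 : Tendsto (fun T : ℝ => -(T * p i)) atTop atBot := tendsto_neg_atTop_atBot.comp h1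
    have h3 := tendsto_atBot_add_const_left atTop (δ i) h2
    simpa [sub_eq_add_neg] using h3
  have hsumT : Tendsto (fun T : ℝ => ∑ i, Real.exp (δ i - T * p i)) atTop (nhds 0) := by
    have := tendsto_finset_sum (Finset.univ : Finset (Fin J))
      (fun i _ => hexpT i)
    simpa using this
  obtain ⟨T, hTe, hTS, hT0⟩ :=
    (((hexpT j).eventually_lt_const hε'0).and (((hsumT.eventually_lt_const hε'0)).and
      (eventually_gt_atTop (0:ℝ)))).exists
  set S : ℝ := ∑ i, Real.exp (δ i - T * p i) with hSdef
  set e : ℝ := Real.exp (δ j - T * p j) with hedef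
  have he0 : 0 < e := Real.exp_pos _
  have hS0 : 0 ≤ S := Finset.sum_nonneg fun i _ => (Real.exp_pos _).le
  have hTpj : 0 < T * p j := by positivity
  -- apply the ratio lemma composed with l ↦ l * p j
  have hcomp := (ratio_tendsto (μ := μ) hσ hTpj).comp
    (tendsto_id.atTop_mul_const hpj : Tendsto (fun l : ℝ => l * p j) atTop atTop)
  have hrev := hcomp.eventually_lt_const hε'0
  filter_upwards [hrev, eventually_ge_atTop (1:ℝ)] with l hr hl1
  have hl0 : 0 < l := by linarith
  have hlp : ∀ i, 0 < (l • p) i := by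
    intro i
    have := hp i
    simp only [Pi.smul_apply, smul_eq_mul]
    positivity
  have hlpj : 0 < l * p j := by positivity
  -- identify the numerator
  set Nl : ℝ := ∫ α in Set.Ioi (0:ℝ),
    α * (logitShare δ j (l • p) α * (1 - logitShare δ j (l • p) α)) * lognormalPdf μ σ α
    with hNdef
  have hpd : pd (qLN δ M μ σ j) j (l • p) = -(M * Nl) := by
    rw [pd, show (l • p) j = l * p j from by simp [Pi.smul_apply, smul_eq_mul]] at *
    have := hasDerivAt_qLN (μ := μ) hσ δ M j (l • p) hlp
    rw [show (l • p) j = l * p j from by simp [Pi.smul_apply, smul_eq_mul]] at this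
    exact this.deriv
  set Il : ℝ := ∫ α in Set.Ioi (0:ℝ),
    α * Real.exp (-α * (l * p j)) * lognormalPdf μ σ α with hIdef
  have hIpos : 0 < Il := I0_pos hσ hlpj
  have hLd : deriv (lnLaplace μ σ) (l * p j) = -Il := deriv_lnLaplace hσ hlpj
  -- reduce the expression
  have hexpr : (-(pd (qLN δ M μ σ j) j (l • p))) /
      (M * Real.exp (δ j) * (-(deriv (lnLaplace μ σ) (l * p j))))
      = Nl / (Real.exp (δ j) * Il) := by
    rw [hpd, hLd, neg_neg, neg_neg]
    rw [show M * Real.exp (δ j) * Il = M * (Real.exp (δ j) * Il) by ring]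
    exact mul_div_mul_left _ _ hM.ne'
  rw [hexpr]
  -- bounds
  have hEI : 0 < Real.exp (δ j) * Il := by positivity
  have hNle : Nl ≤ Real.exp (δ j) * Il := by
    have := N_le (μ := μ) hσ δ j (l • p) hlp
    simpa only [hNdef, hIdef, Pi.smul_apply, smul_eq_mul] using this
  -- lower bound via N_ge
  set Jl : ℝ := ∫ α in Set.Ioc (0:ℝ) (T / l),
    α * Real.exp (-α * (l * p j)) * lognormalPdf μ σ α with hJdef
  have hTl : 0 < T / l := by positivity
  have hNge : (1 - e) / (1 + S) * Real.exp (δ j) * (Il - Jl) ≤ Nl := by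
    have hD : ∀ α : ℝ, T / l < α → ∑ i, Real.exp (δ i - α * (l • p) i) ≤ S := by
      intro α hα
      apply Finset.sum_le_sum
      intro i _
      apply Real.exp_le_exp.2
      simp only [Pi.smul_apply, smul_eq_mul]
      have h1 : T < α * l := by
        rw [div_lt_iff₀ hl0] at hα; linarith
      nlinarith [hp i, mul_lt_mul_of_pos_right h1 (hp i)]
    have hs : ∀ α : ℝ, T / l < α → Real.exp (δ j - α * (l • p) j) ≤ e := by
      intro α hα
      apply Real.exp_le_exp.2
      simp only [Pi.smul_apply, smul_eq_mul]
      have h1 : T < α * l := by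
        rw [div_lt_iff₀ hl0] at hα; linarith
      nlinarith [mul_lt_mul_of_pos_right h1 hpj]
    have := N_ge (μ := μ) hσ δ j (l • p) hlp hTl hS0 (by linarith [hTe] : e ≤ 1) hD hs
    simpa only [hNdef, hIdef, hJdef, Pi.smul_apply, smul_eq_mul] using this
  -- Jl / Il small
  have hJsmall : Jl ≤ ε' * Il := by
    have hrw : T * p j / (l * p j) = T / l := by
      rw [mul_comm l (p j), ← div_div, mul_div_assoc, div_self hpj.ne', mul_one]
    have hr' : Jl / Il < ε' := by
      have := hr
      simp only [Function.comp] at this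
      rw [hrw] at this
      exact this
    exact ((div_lt_iff₀ hIpos).1 hr').le
  have hJ0 : 0 ≤ Jl := by
    apply setIntegral_nonneg measurableSet_Ioc
    intro α hα
    have hα' : 0 < α := hα.1
    have := lpdf_nonneg (μ := μ) hσ hα'
    have h := (Real.exp_pos (-α * (l * p j))).le
    positivity
  -- final numeric estimate
  clear_value Nl Il Jl S e
  clear hpd hLd hr hNdef hIdef hJdef hSdef hedef hexpT hsumT hlp
  have hlow : (1 - ε') / (1 + ε') * ((1 - ε') * (Real.exp (δ j) * Il))
      ≤ Nl := by
    refine le_trans ?_ hNge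
    have hc1 : (1 - ε') / (1 + ε') ≤ (1 - e) / (1 + S) := by
      apply div_le_div₀ (by linarith [hTe, he0]) (by linarith [hTe]) (by linarith) (by linarith [hTS])
    have hc2 : (1 - ε') * Il ≤ Il - Jl := by nlinarith
    have hc1' : 0 ≤ (1 - ε') / (1 + ε') := by
      apply div_nonneg <;> linarith
    calc (1 - ε') / (1 + ε') * ((1 - ε') * (Real.exp (δ j) * Il))
        = (1 - ε') / (1 + ε') * Real.exp (δ j) * ((1 - ε') * Il) := by ring
      _ ≤ (1 - e) / (1 + S) * Real.exp (δ j) * (Il - Jl) := by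
          apply mul_le_mul (mul_le_mul_of_nonneg_right hc1 (Real.exp_pos _).le) hc2
            (by nlinarith) ?_
          have : 0 ≤ (1 - e) / (1 + S) :=
            div_nonneg (by linarith [hTe]) (by linarith)
          positivity
  have hrle : (1 - ε') / (1 + ε') * (1 - ε') ≤ Nl / (Real.exp (δ j) * Il) := by
    rw [le_div_iff₀ hEI]
    calc (1 - ε') / (1 + ε') * (1 - ε') * (Real.exp (δ j) * Il)
        = (1 - ε') / (1 + ε') * ((1 - ε') * (Real.exp (δ j) * Il)) := by ring
      _ ≤ Nl := hlow
  have hrub : Nl / (Real.exp (δ j) * Il) ≤ 1 := (div_le_one hEI).2 hNle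
  rw [Real.dist_eq, abs_sub_comm, abs_of_nonneg (by linarith)]
  have hfrac : (1 - ε') / (1 + ε') * (1 - ε') > 1 - ε := by
    rw [gt_iff_lt, ← sub_pos]
    have h1 : 0 < 1 + ε' := by linarith
    have hkey : (1 - ε') / (1 + ε') * (1 - ε') - (1 - ε)
        = ((1 - ε') ^ 2 - (1 - ε) * (1 + ε')) / (1 + ε') := by
      field_simp
    rw [hkey]
    apply div_pos ?_ h1
    nlinarith
  linarith [hrle, hrub, hfrac]
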